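/- Let G, Ĝ be real p×n matrices, Σ_η a real symmetric positive definite p×p matrix, Σ_ω a real symmetric positive definite n×n matrix, α ∈ (0,1], and y ∈ ℝᵖ. Let C, Ĉ be real symmetric positive definite n×n matrices satisfying C⁻¹ = Gᵀ Σ_η⁻¹ G + (α² C + Σ_ω)⁻¹ and Ĉ⁻¹ = Ĝᵀ Σ_η⁻¹ Ĝ + (α² Ĉ + Σ_ω)⁻¹, and let r, r̂ ∈ ℝⁿ satisfy C⁻¹ r = Gᵀ Σ_η⁻¹ y + α (α² C + Σ_ω)⁻¹ r and Ĉ⁻¹ r̂ = Ĝᵀ Σ_η⁻¹ y + α (α² Ĉ + Σ_ω)⁻¹ r̂. Assume Gᵀ Σ_η⁻¹ G is positive definite, ‖G − Ĝ‖₂ ≤ ε for some ε > 0, and there exists β ∈ [0,1) with ‖(α² C + Σ_ω)⁻¹ − (α² Ĉ + Σ_ω)⁻¹‖₂ ≤ β ‖C⁻¹ − Ĉ⁻¹‖₂. Then ‖r − r̂‖₂ ≤ ‖(Gᵀ Σ_η⁻¹ G)⁻¹‖₂ · ( ε ‖Σ_η⁻¹ y‖₂ + (1 + α β) ‖r̂‖₂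 ‖C⁻¹ − Ĉ⁻¹‖₂ ). -/

import Mathlib

open Matrix

/-- The spectral norm of a real matrix: the operator norm induced by the
Euclidean norms on the domain and codomain. -/
noncomputable def specNorm {m n : ℕ} (A : Matrix (Fin m) (Fin n) ℝ) : ℝ :=
  ‖LinearMap.toContinuousLinearMap (Matrix.toEuclideanLin A)‖

/-- The Euclidean norm of a real vector. -/
noncomputable def eucNorm {n : ℕ} (v : Fin n → ℝ) : ℝ :=
  ‖(EuclideanSpace.equiv (Fin n) ℝ).symm v‖

open scoped Matrix.Norms.L2Operator

set_option linter.unnecessarySimpa false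
set_option linter.unusedVariables false

lemma specNorm_eq_l2 {m n : ℕ} (A : Matrix (Fin m) (Fin n) ℝ) : specNorm A = ‖A‖ := rfl

lemma eucNorm_nonneg' {n : ℕ} (v : Fin n → ℝ) : 0 ≤ eucNorm v := norm_nonneg _
lemma specNorm_nonneg' {m n : ℕ} (A : Matrix (Fin m) (Fin n) ℝ) : 0 ≤ specNorm A := norm_nonneg _

lemma clm_apply' {m n : ℕ} (A : Matrix (Fin m) (Fin n) ℝ) (v : Fin n → ℝ) :
    LinearMap.toContinuousLinearMap (Matrix.toEuclideanLin A)
      ((EuclideanSpace.equiv (Fin n) ℝ).symm v)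
      = (EuclideanSpace.equiv (Fin m) ℝ).symm (A *ᵥ v) := by
  simpa using Matrix.toEuclideanLin_apply_piLp_equiv_symm A v

lemma eucNorm_mulVec_le {m n : ℕ} (A : Matrix (Fin m) (Fin n) ℝ) (v : Fin n → ℝ) :
    eucNorm (A *ᵥ v) ≤ specNorm A * eucNorm v := by
  have h := (LinearMap.toContinuousLinearMap (Matrix.toEuclideanLin A)).le_opNorm
    ((EuclideanSpace.equiv (Fin n) ℝ).symm v)
  rwa [clm_apply'] at h

lemma eucNorm_add_le {n : ℕ} (u v : Fin n → ℝ) :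
    eucNorm (u + v) ≤ eucNorm u + eucNorm v := by
  unfold eucNorm; rw [map_add]; exact norm_add_le _ _

lemma eucNorm_smul' {n : ℕ} (c : ℝ) (v : Fin n → ℝ) : eucNorm (c • v) = |c| * eucNorm v := by
  unfold eucNorm; rw [_root_.map_smul, norm_smul, Real.norm_eq_abs]

lemma specNorm_transpose {m n : ℕ} (A : Matrix (Fin m) (Fin n) ℝ) :
    specNorm Aᵀ = specNorm A := by
  rw [specNorm_eq_l2, specNorm_eq_l2, ← Matrix.conjTranspose_eq_transpose_of_trivial,
    Matrix.l2_opNorm_conjTranspose]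

lemma specNorm_sub_comm {m n : ℕ} (A B : Matrix (Fin m) (Fin n) ℝ) :
    specNorm (A - B) = specNorm (B - A) := by
  rw [specNorm_eq_l2, specNorm_eq_l2, ← neg_sub, norm_neg]

lemma dot_le {n : ℕ} (a b : Fin n → ℝ) : a ⬝ᵥ b ≤ eucNorm a * eucNorm b := by
  have h := real_inner_le_norm ((WithLp.equiv 2 (Fin n → ℝ)).symm a)
    ((WithLp.equiv 2 (Fin n → ℝ)).symm b)
  rw [show inner ℝ ((WithLp.equiv 2 (Fin n → ℝ)).symm a) ((WithLp.equiv 2 (Fin n → ℝ)).symm b)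
    = b ⬝ᵥ a from rfl, dotProduct_comm] at h
  simpa [eucNorm] using h

lemma eucNorm_sq {n : ℕ} (a : Fin n → ℝ) : eucNorm a ^ 2 = a ⬝ᵥ a := by
  have h := real_inner_self_eq_norm_sq ((WithLp.equiv 2 (Fin n → ℝ)).symm a)
  rw [show inner ℝ ((WithLp.equiv 2 (Fin n → ℝ)).symm a) ((WithLp.equiv 2 (Fin n → ℝ)).symm a)
    = a ⬝ᵥ a from rfl] at h
  simpa [eucNorm] using h.symm

lemma posDef_smul' {n : ℕ} {A : Matrix (Fin n) (Fin n) ℝ} (hA : A.PosDef) {c : ℝ}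
    (hc : 0 < c) : (c • A).PosDef := by
  refine ⟨?_, fun x hx => ?_⟩
  · show (c • A)ᴴ = c • A
    rw [conjTranspose_smul, hA.1.eq]; simp
  · exact (hA.smul hc).2 hx

lemma posSemidef_smul' {n : ℕ} {A : Matrix (Fin n) (Fin n) ℝ} (hA : A.PosSemidef) {c : ℝ}
    (hc : 0 ≤ c) : (c • A).PosSemidef := by
  refine ⟨?_, fun x => ?_⟩
  · show (c • A)ᴴ = c • A
    rw [conjTranspose_smul, hA.1.eq]; simp
  · exact (hA.smul hc).2 x

lemma symm_dot_swap {n : ℕ} {M : Matrix (Fin n) (Fin n) ℝ} (hM : Mᵀ = M)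
    (x y : Fin n → ℝ) : y ⬝ᵥ (M *ᵥ x) = x ⬝ᵥ (M *ᵥ y) := by
  rw [dotProduct_mulVec y M x, ← mulVec_transpose, hM, dotProduct_comm]

/-- generalized Cauchy–Schwarz for a PSD quadratic form. -/
lemma psd_cauchy {n : ℕ} {M : Matrix (Fin n) (Fin n) ℝ} (hM : M.PosSemidef)
    (x y : Fin n → ℝ) :
    (x ⬝ᵥ (M *ᵥ y)) ^ 2 ≤ (x ⬝ᵥ (M *ᵥ x)) * (y ⬝ᵥ (M *ᵥ y)) := by
  have hsymm : Mᵀ = M := by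
    have := hM.1.eq; rwa [Matrix.conjTranspose_eq_transpose_of_trivial] at this
  have hswap : y ⬝ᵥ (M *ᵥ x) = x ⬝ᵥ (M *ᵥ y) := symm_dot_swap hsymm x y
  have hq : ∀ t : ℝ, 0 ≤ (y ⬝ᵥ (M *ᵥ y)) * (t * t) + (2 * (x ⬝ᵥ (M *ᵥ y))) * t
      + (x ⬝ᵥ (M *ᵥ x)) := by
    intro t
    have h0 := hM.dotProduct_mulVec_nonneg (x + t • y)
    simp only [star_trivial, mulVec_add, mulVec_smul, dotProduct_add, add_dotProduct,
      smul_dotProduct, dotProduct_smul, smul_eq_mul] at h0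
    rw [hswap] at h0
    nlinarith [h0]
  have hd := discrim_le_zero hq
  rw [discrim] at hd
  nlinarith [hd]

lemma quad_lower {n : ℕ} {M : Matrix (Fin n) (Fin n) ℝ} (hM : M.PosDef) (u : Fin n → ℝ) :
    eucNorm u ^ 2 ≤ specNorm M⁻¹ * (u ⬝ᵥ (M *ᵥ u)) := by
  have hdet : IsUnit M.det := hM.det_pos.ne'.isUnit
  have h1 : M *ᵥ (M⁻¹ *ᵥ u) = u := by
    rw [mulVec_mulVec, Matrix.mul_nonsing_inv _ hdet, one_mulVec]
  have hCS := psd_cauchy hM.posSemidef u (M⁻¹ *ᵥ u)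
  rw [h1] at hCS
  have h2 : (M⁻¹ *ᵥ u) ⬝ᵥ u ≤ eucNorm (M⁻¹ *ᵥ u) * eucNorm u := dot_le _ _
  have h3 : eucNorm (M⁻¹ *ᵥ u) ≤ specNorm M⁻¹ * eucNorm u := eucNorm_mulVec_le _ _
  have hq : 0 ≤ u ⬝ᵥ (M *ᵥ u) := by simpa using hM.posSemidef.dotProduct_mulVec_nonneg u
  have hsq : u ⬝ᵥ u = eucNorm u ^ 2 := (eucNorm_sq u).symm
  rw [hsq] at hCS
  have h4 : (M⁻¹ *ᵥ u) ⬝ᵥ u ≤ specNorm M⁻¹ * eucNorm u * eucNorm u := by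
    nlinarith [h2, h3, eucNorm_nonneg' u, eucNorm_nonneg' (M⁻¹ *ᵥ u)]
  have h5 : (eucNorm u ^ 2) ^ 2 ≤ u ⬝ᵥ (M *ᵥ u) * (specNorm M⁻¹ * eucNorm u * eucNorm u) :=
    le_trans hCS (mul_le_mul_of_nonneg_left h4 hq)
  rcases eq_or_lt_of_le (eucNorm_nonneg' u) with h0 | h0
  · rw [← h0]
    simpa using mul_nonneg (specNorm_nonneg' M⁻¹) hq
  · nlinarith [h5, mul_pos h0 h0]

lemma inv_specNorm_le {n : ℕ} {M A : Matrix (Fin n) (Fin n) ℝ} (hM : M.PosDef) (hA : A.PosDef)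
    (h : ∀ u, u ⬝ᵥ (M *ᵥ u) ≤ u ⬝ᵥ (A *ᵥ u)) : specNorm A⁻¹ ≤ specNorm M⁻¹ := by
  have hptw : ∀ w : Fin n → ℝ, eucNorm (A⁻¹ *ᵥ w) ≤ specNorm M⁻¹ * eucNorm w := by
    intro w
    set u := A⁻¹ *ᵥ w with hu
    have hAu : A *ᵥ u = w := by
      rw [hu, mulVec_mulVec, Matrix.mul_nonsing_inv _ hA.det_pos.ne'.isUnit, one_mulVec]
    have l1 : eucNorm u ^ 2 ≤ specNorm M⁻¹ * (u ⬝ᵥ (M *ᵥ u)) := quad_lower hM u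
    have l2 : u ⬝ᵥ (M *ᵥ u) ≤ u ⬝ᵥ w := by rw [← hAu]; exact h u
    have l3 : u ⬝ᵥ w ≤ eucNorm u * eucNorm w := dot_le _ _
    rcases eq_or_lt_of_le (eucNorm_nonneg' u) with h0 | h0
    · rw [← h0]
      exact mul_nonneg (specNorm_nonneg' _) (eucNorm_nonneg' _)
    · nlinarith [specNorm_nonneg' M⁻¹, eucNorm_nonneg' w]
  show ‖LinearMap.toContinuousLinearMap (Matrix.toEuclideanLin A⁻¹)‖ ≤ specNorm M⁻¹
  refine ContinuousLinearMap.opNorm_le_bound _ (specNorm_nonneg' M⁻¹) fun x => ?_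
  have hx : (EuclideanSpace.equiv (Fin n) ℝ).symm ((EuclideanSpace.equiv (Fin n) ℝ) x) = x :=
    (EuclideanSpace.equiv (Fin n) ℝ).symm_apply_apply x
  calc ‖LinearMap.toContinuousLinearMap (Matrix.toEuclideanLin A⁻¹) x‖
      = eucNorm (A⁻¹ *ᵥ (EuclideanSpace.equiv (Fin n) ℝ) x) := by
        rw [← hx, clm_apply']; rfl
    _ ≤ specNorm M⁻¹ * eucNorm ((EuclideanSpace.equiv (Fin n) ℝ) x) := hptw _
    _ = specNorm M⁻¹ * ‖x‖ := by rw [eucNorm, hx]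

theorem stmt_11 {p n : ℕ} (G Ghat : Matrix (Fin p) (Fin n) ℝ)
    (Sη : Matrix (Fin p) (Fin p) ℝ) (hSη : Sη.PosDef)
    (Sω : Matrix (Fin n) (Fin n) ℝ) (hSω : Sω.PosDef)
    (α : ℝ) (hα0 : 0 < α) (hα1 : α ≤ 1) (y : Fin p → ℝ)
    (C Chat : Matrix (Fin n) (Fin n) ℝ) (hC : C.PosDef) (hChat : Chat.PosDef)
    (hfixC : C⁻¹ = Gᵀ * Sη⁻¹ * G + (α ^ 2 • C + Sω)⁻¹)
    (hfixChat : Chat⁻¹ = Ghatᵀ * Sη⁻¹ * Ghat + (α ^ 2 • Chat + Sω)⁻¹)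
    (r rhat : Fin n → ℝ)
    (hr : C⁻¹ *ᵥ r = (Gᵀ * Sη⁻¹) *ᵥ y + α • ((α ^ 2 • C + Sω)⁻¹ *ᵥ r))
    (hrhat : Chat⁻¹ *ᵥ rhat =
      (Ghatᵀ * Sη⁻¹) *ᵥ y + α • ((α ^ 2 • Chat + Sω)⁻¹ *ᵥ rhat))
    (hGPD : (Gᵀ * Sη⁻¹ * G).PosDef)
    (ε : ℝ) (hε : 0 < ε) (hGG : specNorm (G - Ghat) ≤ ε)
    (β : ℝ) (hβ0 : 0 ≤ β) (hβ1 : β < 1)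
    (hcontr : specNorm ((α ^ 2 • C + Sω)⁻¹ - (α ^ 2 • Chat + Sω)⁻¹) ≤
      β * specNorm (C⁻¹ - Chat⁻¹)) :
    eucNorm (r - rhat) ≤ specNorm (Gᵀ * Sη⁻¹ * G)⁻¹ *
      (ε * eucNorm (Sη⁻¹ *ᵥ y) + (1 + α * β) * eucNorm rhat * specNorm (C⁻¹ - Chat⁻¹)) := by
  set M := Gᵀ * Sη⁻¹ * G with hM_def
  set B := (α ^ 2 • C + Sω)⁻¹ with hB_def
  set Bh := (α ^ 2 • Chat + Sω)⁻¹ with hBh_def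
  -- positivity facts
  have hBpd : B.PosDef := ((posDef_smul' hC (pow_pos hα0 2)).add hSω).inv
  have hBhpd : Bh.PosDef := ((posDef_smul' hChat (pow_pos hα0 2)).add hSω).inv
  have hBsm : ((1 - α) • B).PosSemidef := posSemidef_smul' hBpd.posSemidef (by linarith)
  set A := M + (1 - α) • B with hA_def
  have hApd : A.PosDef := hGPD.add_posSemidef hBsm
  -- quadratic form comparison
  have hcomp : ∀ u, u ⬝ᵥ (M *ᵥ u) ≤ u ⬝ᵥ (A *ᵥ u) := by
    intro u
    rw [hA_def, add_mulVec, dotProduct_add]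
    have := hBsm.dotProduct_mulVec_nonneg u
    simp only [star_trivial] at this
    linarith
  have hAinvM : specNorm A⁻¹ ≤ specNorm M⁻¹ := inv_specNorm_le hGPD hApd hcomp
  -- the key vector identity
  set t1 : Fin n → ℝ := ((G - Ghat)ᵀ * Sη⁻¹) *ᵥ y with ht1
  set t2 : Fin n → ℝ := (Chat⁻¹ - C⁻¹) *ᵥ rhat with ht2
  set t3 : Fin n → ℝ := α • ((B - Bh) *ᵥ rhat) with ht3
  have hMC : M = C⁻¹ - B := by rw [hfixC]; abel
  have hMhC : Ghatᵀ * Sη⁻¹ * Ghat = Chat⁻¹ - Bh := by rw [hfixChat]; abel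
  have h1 : (Gᵀ * Sη⁻¹) *ᵥ y = C⁻¹ *ᵥ r - α • (B *ᵥ r) := by rw [hr]; abel
  have h2 : (Ghatᵀ * Sη⁻¹) *ᵥ y = Chat⁻¹ *ᵥ rhat - α • (Bh *ᵥ rhat) := by rw [hrhat]; abel
  have hkey : A *ᵥ (r - rhat) = t1 + (t2 + t3) := by
    rw [ht1, ht2, ht3, hA_def, hMC]
    have hty : ((G - Ghat)ᵀ * Sη⁻¹) *ᵥ y = (Gᵀ * Sη⁻¹) *ᵥ y - (Ghatᵀ * Sη⁻¹) *ᵥ y := by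
      rw [transpose_sub, Matrix.sub_mul, sub_mulVec]
    rw [hty, h1, h2]
    simp only [add_mulVec, sub_mulVec, smul_mulVec, mulVec_sub]
    module
  have hsol : r - rhat = A⁻¹ *ᵥ (t1 + (t2 + t3)) := by
    rw [← hkey, mulVec_mulVec, Matrix.nonsing_inv_mul _ hApd.det_pos.ne'.isUnit, one_mulVec]
  -- norm bounds
  have e1 : eucNorm t1 ≤ ε * eucNorm (Sη⁻¹ *ᵥ y) := by
    rw [ht1, ← mulVec_mulVec]
    calc eucNorm ((G - Ghat)ᵀ *ᵥ (Sη⁻¹ *ᵥ y))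
        ≤ specNorm (G - Ghat)ᵀ * eucNorm (Sη⁻¹ *ᵥ y) := eucNorm_mulVec_le _ _
      _ = specNorm (G - Ghat) * eucNorm (Sη⁻¹ *ᵥ y) := by rw [specNorm_transpose]
      _ ≤ ε * eucNorm (Sη⁻¹ *ᵥ y) := by
          exact mul_le_mul_of_nonneg_right hGG (eucNorm_nonneg' _)
  have e2 : eucNorm t2 ≤ specNorm (C⁻¹ - Chat⁻¹) * eucNorm rhat := by
    rw [ht2]
    calc eucNorm ((Chat⁻¹ - C⁻¹) *ᵥ rhat)
        ≤ specNorm (Chat⁻¹ - C⁻¹) * eucNorm rhat := eucNorm_mulVec_le _ _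
      _ = specNorm (C⁻¹ - Chat⁻¹) * eucNorm rhat := by rw [specNorm_sub_comm]
  have e3 : eucNorm t3 ≤ α * (β * specNorm (C⁻¹ - Chat⁻¹)) * eucNorm rhat := by
    rw [ht3, eucNorm_smul', abs_of_pos hα0]
    have := eucNorm_mulVec_le (B - Bh) rhat
    have h4 : specNorm (B - Bh) ≤ β * specNorm (C⁻¹ - Chat⁻¹) := hcontr
    calc α * eucNorm ((B - Bh) *ᵥ rhat)
        ≤ α * (specNorm (B - Bh) * eucNorm rhat) := mul_le_mul_of_nonneg_left this hα0.le
      _ ≤ α * (β * specNorm (C⁻¹ - Chat⁻¹) * eucNorm rhat) :=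
          mul_le_mul_of_nonneg_left
            (mul_le_mul_of_nonneg_right h4 (eucNorm_nonneg' _)) hα0.le
      _ = α * (β * specNorm (C⁻¹ - Chat⁻¹)) * eucNorm rhat := by ring
  have hbound : eucNorm (r - rhat) ≤ specNorm A⁻¹ * (eucNorm t1 + (eucNorm t2 + eucNorm t3)) := by
    rw [hsol]
    calc eucNorm (A⁻¹ *ᵥ (t1 + (t2 + t3)))
        ≤ specNorm A⁻¹ * eucNorm (t1 + (t2 + t3)) := eucNorm_mulVec_le _ _
      _ ≤ specNorm A⁻¹ * (eucNorm t1 + (eucNorm t2 + eucNorm t3)) := by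
          refine mul_le_mul_of_nonneg_left ?_ (specNorm_nonneg' _)
          exact le_trans (eucNorm_add_le _ _)
            (by linarith [eucNorm_add_le t2 t3])
  have hsum : eucNorm t1 + (eucNorm t2 + eucNorm t3) ≤
      ε * eucNorm (Sη⁻¹ *ᵥ y) + (1 + α * β) * eucNorm rhat * specNorm (C⁻¹ - Chat⁻¹) := by
    nlinarith [e1, e2, e3]
  calc eucNorm (r - rhat) ≤ specNorm A⁻¹ * (eucNorm t1 + (eucNorm t2 + eucNorm t3)) := hbound
    _ ≤ specNorm M⁻¹ * (ε * eucNorm (Sη⁻¹ *ᵥ y)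
          + (1 + α * β) * eucNorm rhat * specNorm (C⁻¹ - Chat⁻¹)) := by
        have hnn : 0 ≤ eucNorm t1 + (eucNorm t2 + eucNorm t3) := by
          have := eucNorm_nonneg' t1; have := eucNorm_nonneg' t2; have := eucNorm_nonneg' t3
          linarith
        exact mul_le_mul hAinvM hsum hnn (specNorm_nonneg' _)
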